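/- Let Y be a finite type with at least two elements and let w : Y → ℝ be such that w y₀ < 0 for some y₀ ∈ Y. Then the weighted SFT loss is unbounded below over positive probability vectors: for every M ∈ ℝ there exists a positive probability vector π on Y (π y > 0 for all y and ∑_y π y = 1) with -∑_y w y * log(π y) < M. -/

import Mathlib

theorem weighted_sft_loss_unbounded_below_of_neg_weight {Y : Type*} [Fintype Y]
    (hcard : 1 < Fintype.card Y) (w : Y → ℝ) (y₀ : Y) (hw : w y₀ < 0) :
    ∀ M : ℝ, ∃ π : Y → ℝ, (∀ y, 0 < π y) ∧ (∑ y, π y = 1) ∧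
      -∑ y, w y * Real.log (π y) < M := by
  classical
  intro M
  set a : ℝ := -w y₀ with ha
  have ha0 : 0 < a := by simp only [ha]; linarith
  set n : ℕ := Fintype.card Y with hn
  have hm1 : (1:ℝ) ≤ ((n - 1 : ℕ) : ℝ) := by
    have : 1 ≤ n - 1 := by omega
    exact_mod_cast this
  set m : ℝ := ((n - 1 : ℕ) : ℝ) with hmdef
  set C : ℝ := ∑ y, |w y| * Real.log (2 * m) with hC
  set ε : ℝ := min (1/2) (Real.exp ((M - C - 1)/a)) with hε
  have hε0 : 0 < ε := lt_min (by norm_num) (Real.exp_pos _)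
  have hε2 : ε ≤ 1/2 := min_le_left _ _
  have hlogε : Real.log ε ≤ (M - C - 1)/a := by
    calc Real.log ε ≤ Real.log (Real.exp ((M - C - 1)/a)) :=
          Real.log_le_log hε0 (min_le_right _ _)
      _ = (M - C - 1)/a := Real.log_exp _
  set p : ℝ := (1 - ε)/m with hp
  have hm0 : (0:ℝ) < m := by linarith
  have hp0 : 0 < p := div_pos (by linarith) hm0
  have hp1 : p < 1 := by
    rw [hp, div_lt_one hm0]; linarith
  have hlogp : |Real.log p| ≤ Real.log (2 * m) := by
    have h1 : Real.log p ≤ 0 := Real.log_nonpos hp0.le hp1.le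
    rw [abs_of_nonpos h1, ← Real.log_inv]
    apply Real.log_le_log (by positivity)
    rw [inv_le_iff_one_le_mul₀ hp0]
    have : 2 * m * p = 2 * (1 - ε) := by
      rw [hp]; field_simp
    rw [this]; linarith
  have hlog2m : 0 ≤ Real.log (2 * m) := Real.log_nonneg (by linarith)
  refine ⟨fun y => if y = y₀ then ε else p, fun y => ?_, ?_, ?_⟩
  · dsimp only; split <;> [exact hε0; exact hp0]
  · have hsplit := Finset.sum_erase_add Finset.univ
      (fun y => if y = y₀ then ε else p) (Finset.mem_univ y₀)
    rw [← hsplit]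
    have herase : ∑ y ∈ Finset.univ.erase y₀, (if y = y₀ then ε else p) =
        ∑ y ∈ Finset.univ.erase y₀, p := by
      apply Finset.sum_congr rfl
      intro y hy
      rw [if_neg (Finset.ne_of_mem_erase hy)]
    rw [herase, Finset.sum_const]
    simp only [eq_self_iff_true, if_true]
    have hcarde : (Finset.univ.erase y₀).card = n - 1 := by
      rw [Finset.card_erase_of_mem (Finset.mem_univ y₀), Finset.card_univ]
    rw [hcarde]
    have : (↑(n-1) : ℝ) * p = 1 - ε := by
      rw [← hmdef, hp]; field_simp
    rw [nsmul_eq_mul, this]; ring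
  · have hsplit := Finset.sum_erase_add Finset.univ
      (fun y => w y * Real.log (if y = y₀ then ε else p)) (Finset.mem_univ y₀)
    dsimp only
    rw [← hsplit]
    simp only [eq_self_iff_true, if_true]
    have herase : ∑ y ∈ Finset.univ.erase y₀, w y * Real.log (if y = y₀ then ε else p) =
        ∑ y ∈ Finset.univ.erase y₀, w y * Real.log p := by
      apply Finset.sum_congr rfl
      intro y hy
      rw [if_neg (Finset.ne_of_mem_erase hy)]
    rw [herase]
    have key1 : -(w y₀ * Real.log ε) ≤ M - C - 1 := by
      have : -(w y₀ * Real.log ε) = a * Real.log ε := by rw [ha]; ring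
      rw [this]
      calc a * Real.log ε ≤ a * ((M - C - 1)/a) :=
            mul_le_mul_of_nonneg_left hlogε ha0.le
        _ = M - C - 1 := by field_simp
    have key2 : -∑ y ∈ Finset.univ.erase y₀, w y * Real.log p ≤ C := by
      rw [← Finset.sum_neg_distrib]
      calc ∑ y ∈ Finset.univ.erase y₀, -(w y * Real.log p)
          ≤ ∑ y ∈ Finset.univ.erase y₀, |w y| * Real.log (2 * m) := by
            apply Finset.sum_le_sum
            intro y _
            calc -(w y * Real.log p) ≤ |w y * Real.log p| := neg_le_abs _
              _ = |w y| * |Real.log p| := abs_mul _ _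
              _ ≤ |w y| * Real.log (2 * m) :=
                  mul_le_mul_of_nonneg_left hlogp (abs_nonneg _)
        _ ≤ ∑ y, |w y| * Real.log (2 * m) := by
            apply Finset.sum_le_sum_of_subset_of_nonneg (Finset.subset_univ _)
            intro y _ _
            positivity
        _ = C := rfl
    have : -(∑ y ∈ Finset.univ.erase y₀, w y * Real.log p + w y₀ * Real.log ε)
        = -(w y₀ * Real.log ε) + -∑ y ∈ Finset.univ.erase y₀, w y * Real.log p := by
      ring
    rw [this]
    linarith
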